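/- Let G : 𝔻 → 𝔻 be a holomorphic self-map of the open unit disk. Suppose there exist w₀ ∈ 𝔻 and a ∈ ℂ with |a| = 1 such that the orbit Gⁿ(w₀) converges to a as n → ∞. Then for every w ∈ 𝔻, the orbit Gⁿ(w) also converges to a. -/

import Mathlib

open Metric Complex Set

noncomputable def moeb (w z : ℂ) : ℂ := (w - z) / (1 - (starRingEnd ℂ) w * z)

lemma normSq_key (w z : ℂ) :
    Complex.normSq (1 - (starRingEnd ℂ) w * z) - Complex.normSq (w - z) =
      (1 - Complex.normSq w) * (1 - Complex.normSq z) := by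
  simp only [Complex.normSq_apply, Complex.mul_re, Complex.mul_im, Complex.sub_re,
    Complex.sub_im, Complex.one_re, Complex.one_im, Complex.conj_re, Complex.conj_im]
  ring

lemma denom_ne {w z : ℂ} (hw : ‖w‖ < 1) (hz : ‖z‖ < 1) :
    (1 : ℂ) - (starRingEnd ℂ) w * z ≠ 0 := by
  intro h
  have h1 : (starRingEnd ℂ) w * z = 1 := by linear_combination -h
  have : ‖(starRingEnd ℂ) w * z‖ = 1 := by rw [h1]; simp
  rw [norm_mul, Complex.norm_conj] at this
  nlinarith [norm_nonneg w, norm_nonneg z]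

lemma abs_lt_denom {w z : ℂ} (hw : ‖w‖ < 1) (hz : ‖z‖ < 1) :
    ‖w - z‖ < ‖1 - (starRingEnd ℂ) w * z‖ := by
  have key := normSq_key w z
  have h1 : Complex.normSq w < 1 := by rw [← Complex.sq_norm]; nlinarith [norm_nonneg w]
  have h2 : Complex.normSq z < 1 := by rw [← Complex.sq_norm]; nlinarith [norm_nonneg z]
  have : ‖w - z‖ ^ 2 < ‖1 - (starRingEnd ℂ) w * z‖ ^ 2 := by
    rw [Complex.sq_norm, Complex.sq_norm]; nlinarith
  exact lt_of_pow_lt_pow_left₀ 2 (norm_nonneg _) this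

lemma abs_moeb_lt {w z : ℂ} (hw : ‖w‖ < 1) (hz : ‖z‖ < 1) :
    ‖moeb w z‖ < 1 := by
  have hd := denom_ne hw hz
  rw [moeb, norm_div, div_lt_one (norm_pos_iff.mpr hd)]
  exact abs_lt_denom hw hz

lemma moeb_self (w : ℂ) : moeb w w = 0 := by simp [moeb]

lemma moeb_zero (w : ℂ) : moeb w 0 = w := by simp [moeb]

lemma moeb_moeb {w z : ℂ} (hw : ‖w‖ < 1) (hz : ‖z‖ < 1) :
    moeb w (moeb w z) = z := by
  have hd := denom_ne hw hz
  have hww : (1 : ℂ) - w * (starRingEnd ℂ) w ≠ 0 := by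
    have := denom_ne hw hw; rwa [mul_comm] at this
  have e1 : w - (w - z) / (1 - (starRingEnd ℂ) w * z)
      = z * (1 - w * (starRingEnd ℂ) w) / (1 - (starRingEnd ℂ) w * z) := by
    rw [eq_div_iff hd, sub_mul, div_mul_cancel₀ _ hd]; ring
  have e2 : 1 - (starRingEnd ℂ) w * ((w - z) / (1 - (starRingEnd ℂ) w * z))
      = (1 - w * (starRingEnd ℂ) w) / (1 - (starRingEnd ℂ) w * z) := by
    field_simp; ring
  rw [moeb, moeb, e1, e2, div_div_div_cancel_right₀, mul_div_assoc, div_self hww, mul_one]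
  exact hd

lemma abs_of_ball {z : ℂ} (hz : z ∈ Metric.ball (0:ℂ) 1) : ‖z‖ < 1 := by
  simpa using mem_ball_zero_iff.mp hz

lemma ball_of_abs {z : ℂ} (hz : ‖z‖ < 1) : z ∈ Metric.ball (0:ℂ) 1 :=
  mem_ball_zero_iff.mpr (by simpa using hz)

lemma moeb_diffOn {w : ℂ} (hw : ‖w‖ < 1) :
    DifferentiableOn ℂ (moeb w) (Metric.ball (0:ℂ) 1) := by
  apply DifferentiableOn.div
  · exact ((differentiable_const w).sub differentiable_id).differentiableOn
  · exact ((differentiable_const (1:ℂ)).sub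
      ((differentiable_const _).mul differentiable_id)).differentiableOn
  · intro z hz
    exact denom_ne hw (abs_of_ball hz)

lemma moeb_mapsTo {w : ℂ} (hw : ‖w‖ < 1) :
    Set.MapsTo (moeb w) (Metric.ball (0:ℂ) 1) (Metric.ball (0:ℂ) 1) := fun z hz =>
  ball_of_abs (abs_moeb_lt hw (abs_of_ball hz))

lemma schwarz_pick {G : ℂ → ℂ}
    (hG : DifferentiableOn ℂ G (Metric.ball (0:ℂ) 1))
    (hmaps : Set.MapsTo G (Metric.ball (0:ℂ) 1) (Metric.ball (0:ℂ) 1))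
    {z w : ℂ} (hz : z ∈ Metric.ball (0:ℂ) 1) (hw : w ∈ Metric.ball (0:ℂ) 1) :
    ‖moeb (G w) (G z)‖ ≤ ‖moeb w z‖ := by
  have hw' := abs_of_ball hw
  have hz' := abs_of_ball hz
  have hGw' : ‖G w‖ < 1 := abs_of_ball (hmaps hw)
  set g : ℂ → ℂ := fun u => moeb (G w) (G (moeb w u)) with hg
  have hgd : DifferentiableOn ℂ g (Metric.ball (0:ℂ) 1) :=
    ((moeb_diffOn hGw').comp (hG.comp (moeb_diffOn hw') (moeb_mapsTo hw'))
      (hmaps.comp (moeb_mapsTo hw')))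
  have hgm : Set.MapsTo g (Metric.ball (0:ℂ) 1) (Metric.ball (0:ℂ) 1) :=
    (moeb_mapsTo hGw').comp (hmaps.comp (moeb_mapsTo hw'))
  have hg0 : g 0 = 0 := by simp [hg, moeb_zero, moeb_self]
  have key := Complex.norm_le_norm_of_mapsTo_ball hgd (hgm.mono_right ball_subset_closedBall) hg0
    (z := moeb w z) (by simpa using abs_moeb_lt hw' hz')
  simp only [hg, moeb_moeb hw' hz'] at key
  exact key


/-- let `G : 𝔻 → 𝔻` be a holomorphic self-map of the unit disk. If some
orbit `Gⁿ(w₀)` converges to a point `a` of the unit circle, then every orbit `Gⁿ(w)`,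
`w ∈ 𝔻`, converges to `a`. -/
theorem stmt_16 (G : ℂ → ℂ)
    (hG : DifferentiableOn ℂ G (Metric.ball (0:ℂ) 1))
    (hmaps : Set.MapsTo G (Metric.ball (0:ℂ) 1) (Metric.ball (0:ℂ) 1))
    (w₀ : ℂ) (hw₀ : w₀ ∈ Metric.ball (0:ℂ) 1)
    (a : ℂ) (ha : ‖a‖ = 1)
    (horb : Filter.Tendsto (fun n => G^[n] w₀) Filter.atTop (nhds a)) :
    ∀ w ∈ Metric.ball (0:ℂ) 1,
      Filter.Tendsto (fun n => G^[n] w) Filter.atTop (nhds a) := by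
  intro w hw
  have horbmem : ∀ u ∈ Metric.ball (0:ℂ) 1, ∀ n, G^[n] u ∈ Metric.ball (0:ℂ) 1 := by
    intro u hu n
    induction n with
    | zero => simpa using hu
    | succ n ih => rw [Function.iterate_succ_apply']; exact hmaps ih
  set c := ‖moeb w₀ w‖ with hc
  have hc1 : c < 1 := abs_moeb_lt (abs_of_ball hw₀) (abs_of_ball hw)
  have hc0 : 0 ≤ c := norm_nonneg _
  have hcn : ∀ n, ‖moeb (G^[n] w₀) (G^[n] w)‖ ≤ c := by
    intro n
    induction n with
    | zero => simp [hc]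
    | succ n ih =>
      rw [Function.iterate_succ_apply', Function.iterate_succ_apply']
      exact le_trans (schwarz_pick hG hmaps (horbmem w hw n) (horbmem w₀ hw₀ n)) ih
  have hbound : ∀ n, ‖G^[n] w - G^[n] w₀‖
      ≤ c / (1 - c) * (1 - Complex.normSq (G^[n] w₀)) := by
    intro n
    set y := G^[n] w₀ with hy0
    set x := G^[n] w with hx0
    have hy : ‖y‖ < 1 := abs_of_ball (horbmem w₀ hw₀ n)
    have hx : ‖x‖ < 1 := abs_of_ball (horbmem w hw n)
    have hd : (1:ℂ) - (starRingEnd ℂ) y * x ≠ 0 := denom_ne hy hx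
    have h1 : ‖y - x‖ ≤ c * ‖1 - (starRingEnd ℂ) y * x‖ := by
      have h := hcn n
      rw [← hy0, ← hx0, moeb, norm_div, div_le_iff₀ (norm_pos_iff.mpr hd)] at h
      exact h
    have hyy : (starRingEnd ℂ) y * y = (Complex.normSq y : ℂ) := by
      rw [mul_comm, Complex.mul_conj]
    have e : (1:ℂ) - (starRingEnd ℂ) y * x
        = (1 - (Complex.normSq y : ℂ)) + (starRingEnd ℂ) y * (y - x) := by
      linear_combination -hyy
    have hnsq : Complex.normSq y < 1 := by
      rw [← Complex.sq_norm]; nlinarith [norm_nonneg y]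
    have h2 : ‖1 - (starRingEnd ℂ) y * x‖
        ≤ (1 - Complex.normSq y) + ‖y - x‖ := by
      rw [e]
      refine le_trans (norm_add_le _ _) ?_
      have e1 : ‖1 - (Complex.normSq y : ℂ)‖ = 1 - Complex.normSq y := by
        rw [show (1 : ℂ) - (Complex.normSq y : ℂ) = ((1 - Complex.normSq y : ℝ) : ℂ) by
          push_cast; ring, Complex.norm_real, Real.norm_eq_abs, _root_.abs_of_nonneg (by linarith)]
      have e2 : ‖(starRingEnd ℂ) y * (y - x)‖ ≤ ‖y - x‖ := by
        rw [norm_mul, Complex.norm_conj]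
        nlinarith [norm_nonneg (y - x), norm_nonneg y]
      linarith
    rw [show x - y = -(y - x) by ring, norm_neg, div_mul_eq_mul_div,
      le_div_iff₀ (by linarith : (0:ℝ) < 1 - c)]
    nlinarith [norm_nonneg (y - x), norm_nonneg (1 - (starRingEnd ℂ) y * x)]
  have hnormSq : Filter.Tendsto (fun n => 1 - Complex.normSq (G^[n] w₀))
      Filter.atTop (nhds 0) := by
    have hcont : Continuous fun z : ℂ => 1 - Complex.normSq z := by continuity
    have h := (hcont.tendsto a).comp horb
    have ha2 : 1 - Complex.normSq a = 0 := by
      rw [Complex.normSq_eq_norm_sq, ha]; norm_num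
    rw [ha2] at h
    exact h
  have hdiff : Filter.Tendsto (fun n => G^[n] w - G^[n] w₀) Filter.atTop (nhds 0) := by
    refine squeeze_zero_norm (a := fun n => c / (1 - c) * (1 - Complex.normSq (G^[n] w₀))) (fun n => ?_) ?_
    · simpa using hbound n
    · have := (tendsto_const_nhds (x := c / (1 - c))).mul hnormSq
      simpa using this
  have := hdiff.add horb
  simpa using this
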